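/- Telescoping step in the A=D case: with the exponents a_j, b_j, c_j, d_j and factors ω_j, ω'_j as in the A=D theorem (where ω'_j are the corresponding factors for τ(w), with exponents a'_j, b'_j, c'_j, d'_j satisfying a'_{k+1−j} = −d_j, b'_{k+1−j} = 1 − a_j + b_j − d_j, c'_{k+1−j} = 1 − a_j + c_j − d_j, d'_{k+1−j} = −a_j), define Φ(j) := q^{a_j d_j} · [∏_{l=1−a_j+b_j−d_j}^{b_j−d_j}(A−Bq^l) · ∏_{l=1−a_j+c_j−d_j}^{c_j−d_j}(A−Cq^l)] / [∏_{l=1−a_j+b_j}^{b_j}(A−Bq^l) · ∏_{l=1−a_j+c_j}^{c_j}(A−Cq^l)] ∈ ℚ(A,B,C,q). Then for each 1 ≤ j ≤ k, Φ(j)/Φ(j−1) = ω_j / ω'_{k+1−j}, and consequently ∏_{j=1}^k ω_j = ∏_{j=1}^k ω'_j since Φ(0) = Φ(k) = 1. -/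

import Mathlib

/-- The six formal letters `e_{AB}, e_{AC}, e_{AD}, e_{BC}, e_{BD}, e_{CD}`. -/
inductive Letter : Type
  | AB | AC | AD | BC | BD | CD
  deriving DecidableEq

/-- A word is admissible if it does not begin with a letter `e_{Av}` and does not end
with a letter `e_{uD}`. -/
def AdmissibleWord (w : List Letter) : Prop :=
  (∀ u ∈ w.head?, u ∉ [Letter.AB, Letter.AC, Letter.AD]) ∧
  (∀ u ∈ w.getLast?, u ∉ [Letter.AD, Letter.BD, Letter.CD])

/-- The letter `e_{σ(v)σ(u)}` obtained from `e_{uv}` by the involution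
`σ = (A D)(B C)`. -/
def Letter.dual : Letter → Letter
  | .AB => .CD | .AC => .BD | .AD => .AD | .BC => .BC | .BD => .AC | .CD => .AB

/-- The anti-automorphism `τ` on words: reverse the word and dualize each letter. -/
def tauWord (w : List Letter) : List Letter := (w.map Letter.dual).reverse

/-- The field `ℚ(A, B, C, q)` of rational functions in four independent
indeterminates. -/
abbrev K4 : Type := FractionRing (MvPolynomial (Fin 4) ℚ)

noncomputable def vA : K4 := algebraMap (MvPolynomial (Fin 4) ℚ) K4 (MvPolynomial.X 0)
noncomputable def vB : K4 := algebraMap (MvPolynomial (Fin 4) ℚ) K4 (MvPolynomial.X 1)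
noncomputable def vC : K4 := algebraMap (MvPolynomial (Fin 4) ℚ) K4 (MvPolynomial.X 2)
noncomputable def vq : K4 := algebraMap (MvPolynomial (Fin 4) ℚ) K4 (MvPolynomial.X 3)

/-- `a_j = #{h ≤ j : u_h ∈ {BC,BD,CD}}` (`j` is 1-based). -/
def aexp (w : List Letter) (j : ℕ) : ℕ :=
  (w.take j).countP (fun u => u == Letter.BC || u == Letter.BD || u == Letter.CD)

/-- `b_j = #{h ≤ j : u_h ∉ {AC,AD}} + #{h > j : u_h = CD}` (`j` is 1-based). -/
def bexp (w : List Letter) (j : ℕ) : ℕ :=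
  (w.take j).countP (fun u => !(u == Letter.AC || u == Letter.AD))
    + (w.drop j).countP (fun u => u == Letter.CD)

/-- `c_j = #{h ≤ j : u_h ∉ {AB,AD}} + #{h > j : u_h = BD}` (`j` is 1-based). -/
def cexp (w : List Letter) (j : ℕ) : ℕ :=
  (w.take j).countP (fun u => !(u == Letter.AB || u == Letter.AD))
    + (w.drop j).countP (fun u => u == Letter.BD)

/-- `d_j = −#{h > j : u_h ∈ {AB,AC,BC}}` (`j` is 1-based). -/
def dexp (w : List Letter) (j : ℕ) : ℤ :=
  -(((w.drop j).countP
      (fun u => u == Letter.AB || u == Letter.AC || u == Letter.BC) : ℕ) : ℤ)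

/-- The factor `ω_j` of `L_q(w)` in the case `A = D` (`j : Fin w.length`, 0-based,
corresponding to the 1-based index `j+1`). -/
noncomputable def omegaF (w : List Letter) (j : Fin w.length) : K4 :=
  match w.get j with
  | .AB => vA / (vA - vA * vq ^ (aexp w (j + 1)))
      - vA / (vA - vB * vq ^ (bexp w (j + 1)))
  | .AC => vA / (vA - vA * vq ^ (aexp w (j + 1)))
      - vA / (vA - vC * vq ^ (cexp w (j + 1)))
  | .AD => vA / (vA - vA * vq ^ (aexp w (j + 1)))
      - vA / (vA - vA * vq ^ (dexp w (j + 1)))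
  | .BC => vA / (vA - vB * vq ^ (bexp w (j + 1)))
      - vA / (vA - vC * vq ^ (cexp w (j + 1)))
  | .BD => vA / (vA - vB * vq ^ (bexp w (j + 1)))
      - vA / (vA - vA * vq ^ (dexp w (j + 1)))
  | .CD => vA / (vA - vC * vq ^ (cexp w (j + 1)))
      - vA / (vA - vA * vq ^ (dexp w (j + 1)))

/-- `L_q(w) = ∏_j ω_j` in the degenerate case `A = D` (the single chain
`t_1 = ⋯ = t_k = A`). -/
noncomputable def LqAD (w : List Letter) : K4 :=
  ∏ j : Fin w.length, omegaF w j

/-- The partial product `∏_{i<len} (A − P q^{top−i}) = ∏_{l=top−len+1}^{top} (A − P q^l)`. -/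
noncomputable def pprod (P : K4) (top : ℤ) (len : ℕ) : K4 :=
  ∏ i ∈ Finset.range len, (vA - P * vq ^ (top - i))

/-- The telescoping quantity
`Φ(j) = q^{a_j d_j} ∏_{l=1−a_j+b_j−d_j}^{b_j−d_j}(A−Bq^l) ∏_{l=1−a_j+c_j−d_j}^{c_j−d_j}(A−Cq^l)
  / (∏_{l=1−a_j+b_j}^{b_j}(A−Bq^l) ∏_{l=1−a_j+c_j}^{c_j}(A−Cq^l))` (`j` is 1-based,
`0 ≤ j ≤ k`). -/
noncomputable def Phi (w : List Letter) (j : ℕ) : K4 :=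
  vq ^ ((aexp w j : ℤ) * dexp w j)
    * pprod vB ((bexp w j : ℤ) - dexp w j) (aexp w j)
    * pprod vC ((cexp w j : ℤ) - dexp w j) (aexp w j)
    / (pprod vB (bexp w j) (aexp w j) * pprod vC (cexp w j) (aexp w j))

open MvPolynomial in
lemma emb_inj : Function.Injective (algebraMap (MvPolynomial (Fin 4) ℚ) K4) :=
  IsFractionRing.injective _ _

lemma vq_ne : vq ≠ 0 := by
  rw [vq, map_ne_zero_iff _ emb_inj]
  exact MvPolynomial.X_ne_zero 3

lemma vA_ne : vA ≠ 0 := by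
  rw [vA, map_ne_zero_iff _ emb_inj]
  exact MvPolynomial.X_ne_zero 0

/-- reduce a zpow-inequality to a polynomial inequality -/
lemma mul_zpow_ne (i j : Fin 4) (m n : ℤ)
    (H : ∀ s t : ℕ, (s : ℤ) - t = m - n →
      (MvPolynomial.X i * MvPolynomial.X 3 ^ s : MvPolynomial (Fin 4) ℚ)
        ≠ MvPolynomial.X j * MvPolynomial.X 3 ^ t) :
    (algebraMap (MvPolynomial (Fin 4) ℚ) K4 (MvPolynomial.X i)) * vq ^ m
      ≠ (algebraMap (MvPolynomial (Fin 4) ℚ) K4 (MvPolynomial.X j)) * vq ^ n := by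
  intro h
  have hN := True.intro
  set N : ℤ := (((-m).toNat + (-n).toNat : ℕ) : ℤ) with hNdef
  have hm : 0 ≤ m + N := by
    have := Int.self_le_toNat (-m)
    omega
  have hn : 0 ≤ n + N := by
    have := Int.self_le_toNat (-n)
    omega
  have h2 : (algebraMap (MvPolynomial (Fin 4) ℚ) K4 (MvPolynomial.X i)) * vq ^ (m + N)
      = (algebraMap (MvPolynomial (Fin 4) ℚ) K4 (MvPolynomial.X j)) * vq ^ (n + N) := by
    rw [zpow_add₀ vq_ne m N, zpow_add₀ vq_ne n N, ← mul_assoc, ← mul_assoc, h]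
  rw [show m + N = ((m+N).toNat : ℤ) by omega, show n + N = ((n+N).toNat : ℤ) by omega,
    zpow_natCast, zpow_natCast, vq, ← map_pow, ← map_mul, ← map_pow, ← map_mul] at h2
  exact H (m+N).toNat (n+N).toNat (by omega) (emb_inj h2)

lemma poly_ne_eval (i j : Fin 4) (s t : ℕ) (v : Fin 4 → ℚ)
    (hv : v i * v 3 ^ s ≠ v j * v 3 ^ t) :
    (MvPolynomial.X i * MvPolynomial.X 3 ^ s : MvPolynomial (Fin 4) ℚ)
      ≠ MvPolynomial.X j * MvPolynomial.X 3 ^ t := by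
  intro h
  apply hv
  have := congrArg (MvPolynomial.eval v) h
  simpa using this

lemma AB_ne (m n : ℤ) : vA * vq ^ m - vB * vq ^ n ≠ 0 := by
  refine sub_ne_zero.mpr ?_
  refine mul_zpow_ne 0 1 m n fun s t _ => poly_ne_eval 0 1 s t ![1,2,3,1] ?_
  rw [show (![1,2,3,1] : Fin 4 → ℚ) 3 = 1 from rfl]
  norm_num

lemma AC_ne (m n : ℤ) : vA * vq ^ m - vC * vq ^ n ≠ 0 := by
  refine sub_ne_zero.mpr ?_
  refine mul_zpow_ne 0 2 m n fun s t _ => poly_ne_eval 0 2 s t ![1,3,2,1] ?_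
  rw [show (![1,3,2,1] : Fin 4 → ℚ) 3 = 1 from rfl, show (![1,3,2,1] : Fin 4 → ℚ) 2 = 2 from rfl]
  norm_num

lemma BC_ne (m n : ℤ) : vB * vq ^ m - vC * vq ^ n ≠ 0 := by
  refine sub_ne_zero.mpr ?_
  refine mul_zpow_ne 1 2 m n fun s t _ => poly_ne_eval 1 2 s t ![1,1,2,1] ?_
  rw [show (![1,1,2,1] : Fin 4 → ℚ) 3 = 1 from rfl, show (![1,1,2,1] : Fin 4 → ℚ) 2 = 2 from rfl]
  norm_num

lemma AA_ne (m n : ℤ) (hmn : m ≠ n) : vA * vq ^ m - vA * vq ^ n ≠ 0 := by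
  refine sub_ne_zero.mpr ?_
  refine mul_zpow_ne 0 0 m n fun s t hst => poly_ne_eval 0 0 s t ![1,1,1,2] ?_
  have hst2 : s ≠ t := by omega
  intro h
  apply hst2
  have h2 : (2:ℚ) ^ s = (2:ℚ) ^ t := by simpa using h
  exact pow_right_injective₀ (by norm_num) (by norm_num) h2

lemma ABq_ne (n : ℤ) : vA - vB * vq ^ n ≠ 0 := by simpa using AB_ne 0 n
lemma ACq_ne (n : ℤ) : vA - vC * vq ^ n ≠ 0 := by simpa using AC_ne 0 n
lemma AAq_ne (n : ℤ) (hn : n ≠ 0) : vA - vA * vq ^ n ≠ 0 := by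
  simpa using AA_ne 0 n (by omega)

lemma pprod_ne_B (t : ℤ) (n : ℕ) : pprod vB t n ≠ 0 :=
  Finset.prod_ne_zero_iff.mpr fun i _ => ABq_ne _

lemma pprod_ne_C (t : ℤ) (n : ℕ) : pprod vC t n ≠ 0 :=
  Finset.prod_ne_zero_iff.mpr fun i _ => ACq_ne _

lemma pprod_succ_top (P : K4) (t : ℤ) (n : ℕ) :
    pprod P t (n+1) = pprod P (t-1) n * (vA - P * vq ^ t) := by
  rw [pprod, Finset.prod_range_succ']
  congr 1
  · rw [pprod]
    refine Finset.prod_congr rfl fun i _ => ?_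
    congr 2
    push_cast
    ring
  · norm_num

lemma pprod_succ_bot (P : K4) (t : ℤ) (n : ℕ) :
    pprod P t (n+1) = pprod P t n * (vA - P * vq ^ (t - (n:ℤ))) := by
  rw [pprod, Finset.prod_range_succ, pprod]

lemma omega_form (x y : K4) (hx : vA - x ≠ 0) (hy : vA - y ≠ 0) :
    vA / (vA - x) - vA / (vA - y) = vA * (x - y) / ((vA - x) * (vA - y)) := by
  field_simp
  ring
lemma zpow_unit (e : ℤ) : vq ^ (-e) * vq ^ e = 1 := by
  rw [← zpow_add₀ vq_ne]; simp

lemma AA_flip (e : ℤ) : vA - vA * vq ^ (-e) = vq ^ (-e) * (vA * vq ^ e - vA) := by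
  linear_combination (-vA) * zpow_unit e

lemma AAe_ne (e : ℤ) (he : e ≠ 0) : vA * vq ^ e - vA ≠ 0 := by
  simpa using AA_ne e 0 he

lemma flip_num1 (P : K4) (e f : ℤ) :
    vA * vq ^ (-e) - P * vq ^ f = vq ^ (-e) * (vA - P * vq ^ (f + e)) := by
  have h : vq ^ (-e) * vq ^ (f + e) = vq ^ f := by
    rw [← zpow_add₀ vq_ne]; congr 1; ring
  linear_combination P * h

lemma flip_num2 (P : K4) (e f : ℤ) :
    P * vq ^ f - vA * vq ^ (-e) = vq ^ (-e) * (P * vq ^ (f + e) - vA) := by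
  have h : vq ^ (-e) * vq ^ (f + e) = vq ^ f := by
    rw [← zpow_add₀ vq_ne]; congr 1; ring
  linear_combination (-P) * h

lemma flip_numAD (e f : ℤ) :
    vA * vq ^ (-e) - vA * vq ^ (-f)
      = vq ^ (-e) * (vq ^ (-f) * (vA * vq ^ f - vA * vq ^ e)) := by
  linear_combination (-(vA * vq ^ (-e))) * zpow_unit f + (vA * vq ^ (-f)) * zpow_unit e

lemma BA_ne (m n : ℤ) : vB * vq ^ m - vA * vq ^ n ≠ 0 := fun h =>
  AB_ne n m (by linear_combination -h)

lemma CA_ne (m n : ℤ) : vC * vq ^ m - vA * vq ^ n ≠ 0 := fun h =>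
  AC_ne n m (by linear_combination -h)
lemma countP_or_split (q r : Letter → Bool) (hqr : ∀ u : Letter, ¬(q u = true ∧ r u = true))
    (l : List Letter) :
    l.countP (fun u => q u || r u) = l.countP q + l.countP r := by
  induction l with
  | nil => rfl
  | cons a t ih =>
    by_cases hq : q a <;> by_cases hr : r a <;>
      simp [List.countP_cons, hq, hr, ih] <;>
      first
        | omega
        | exact absurd ⟨hq, hr⟩ (hqr a)

lemma tau_take (w : List Letter) (j : ℕ) (hj : j ≤ w.length) :
    (tauWord w).take (w.length - j) = ((w.drop j).map Letter.dual).reverse := by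
  have h1 : tauWord w
      = ((w.drop j).map Letter.dual).reverse ++ ((w.take j).map Letter.dual).reverse := by
    rw [tauWord]
    conv_lhs => rw [← List.take_append_drop j w]
    rw [List.map_append, List.reverse_append]
  have hlen : (((w.drop j).map Letter.dual).reverse).length = w.length - j := by simp
  rw [h1, List.take_left' hlen]

lemma tau_drop (w : List Letter) (j : ℕ) (hj : j ≤ w.length) :
    (tauWord w).drop (w.length - j) = ((w.take j).map Letter.dual).reverse := by
  have h1 : tauWord w
      = ((w.drop j).map Letter.dual).reverse ++ ((w.take j).map Letter.dual).reverse := by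
    rw [tauWord]
    conv_lhs => rw [← List.take_append_drop j w]
    rw [List.map_append, List.reverse_append]
  have hlen : (((w.drop j).map Letter.dual).reverse).length = w.length - j := by simp
  rw [h1, List.drop_left' hlen]

lemma countP_rev_map (p : Letter → Bool) (l : List Letter) :
    ((l.map Letter.dual).reverse).countP p = l.countP (fun u => p u.dual) := by
  rw [List.countP_reverse, List.countP_map]
  rfl

lemma tau_aexp (w : List Letter) (j : ℕ) (hj : j ≤ w.length) :
    (aexp (tauWord w) (w.length - j) : ℤ) = - dexp w j := by
  rw [aexp, dexp, tau_take w j hj, countP_rev_map, neg_neg]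
  norm_cast
  exact List.countP_congr fun u _ => by cases u <;> simp [Letter.dual]

lemma tau_dexp (w : List Letter) (j : ℕ) (hj : j ≤ w.length) :
    dexp (tauWord w) (w.length - j) = -(aexp w j : ℤ) := by
  rw [aexp, dexp, tau_drop w j hj, countP_rev_map, neg_inj]
  norm_cast
  exact List.countP_congr fun u _ => by cases u <;> simp [Letter.dual]

lemma tau_bexp (w : List Letter) (j : ℕ) (hj : j ≤ w.length) :
    (bexp (tauWord w) (w.length - j) : ℤ)
      = (bexp w j : ℤ) - (aexp w j : ℤ) - dexp w j := by
  have h1 : ((tauWord w).take (w.length - j)).countP (fun u => !(u == Letter.AC || u == Letter.AD))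
      = (w.drop j).countP (fun u => u == Letter.AB || u == Letter.AC || u == Letter.BC)
        + (w.drop j).countP (fun u => u == Letter.CD) := by
    rw [tau_take w j hj, countP_rev_map,
      List.countP_congr (q := fun u =>
        (u == Letter.AB || u == Letter.AC || u == Letter.BC) || (u == Letter.CD))
        (fun u _ => by cases u <;> simp [Letter.dual])]
    exact countP_or_split _ _ (fun u => by cases u <;> simp) _
  have h2 : ((tauWord w).drop (w.length - j)).countP (fun u => u == Letter.CD)
      = (w.take j).countP (fun u => u == Letter.AB) := by
    rw [tau_drop w j hj, countP_rev_map]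
    exact List.countP_congr fun u _ => by cases u <;> simp [Letter.dual]
  have h3 : (w.take j).countP (fun u => !(u == Letter.AC || u == Letter.AD))
      = (w.take j).countP (fun u => u == Letter.AB)
        + (w.take j).countP (fun u => u == Letter.BC || u == Letter.BD || u == Letter.CD) := by
    rw [List.countP_congr (q := fun u =>
        (u == Letter.AB) || (u == Letter.BC || u == Letter.BD || u == Letter.CD))
        (fun u _ => by cases u <;> simp)]
    exact countP_or_split _ _ (fun u => by cases u <;> simp) _
  rw [bexp, bexp, aexp, dexp, h1, h2]
  push_cast
  omega

lemma tau_cexp (w : List Letter) (j : ℕ) (hj : j ≤ w.length) :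
    (cexp (tauWord w) (w.length - j) : ℤ)
      = (cexp w j : ℤ) - (aexp w j : ℤ) - dexp w j := by
  have h1 : ((tauWord w).take (w.length - j)).countP (fun u => !(u == Letter.AB || u == Letter.AD))
      = (w.drop j).countP (fun u => u == Letter.AB || u == Letter.AC || u == Letter.BC)
        + (w.drop j).countP (fun u => u == Letter.BD) := by
    rw [tau_take w j hj, countP_rev_map,
      List.countP_congr (q := fun u =>
        (u == Letter.AB || u == Letter.AC || u == Letter.BC) || (u == Letter.BD))
        (fun u _ => by cases u <;> simp [Letter.dual])]
    exact countP_or_split _ _ (fun u => by cases u <;> simp) _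
  have h2 : ((tauWord w).drop (w.length - j)).countP (fun u => u == Letter.BD)
      = (w.take j).countP (fun u => u == Letter.AC) := by
    rw [tau_drop w j hj, countP_rev_map]
    exact List.countP_congr fun u _ => by cases u <;> simp [Letter.dual]
  have h3 : (w.take j).countP (fun u => !(u == Letter.AB || u == Letter.AD))
      = (w.take j).countP (fun u => u == Letter.AC)
        + (w.take j).countP (fun u => u == Letter.BC || u == Letter.BD || u == Letter.CD) := by
    rw [List.countP_congr (q := fun u =>
        (u == Letter.AC) || (u == Letter.BC || u == Letter.BD || u == Letter.CD))
        (fun u _ => by cases u <;> simp)]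
    exact countP_or_split _ _ (fun u => by cases u <;> simp) _
  rw [cexp, cexp, aexp, dexp, h1, h2]
  push_cast
  omega

lemma countP_take_succ (p : Letter → Bool) (w : List Letter) (j : ℕ) (h : j < w.length) :
    (w.take (j+1)).countP p = (w.take j).countP p + (if p w[j] then 1 else 0) := by
  rw [List.take_succ, List.getElem?_eq_getElem h, Option.toList_some, List.countP_append]
  simp [List.countP_cons]

lemma countP_drop_split (p : Letter → Bool) (w : List Letter) (j : ℕ) (h : j < w.length) :
    (w.drop j).countP p = (if p w[j] then 1 else 0) + (w.drop (j+1)).countP p := by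
  rw [List.drop_eq_getElem_cons h, List.countP_cons]
  omega

lemma aexp_pos (w : List Letter) (hh : ∀ u ∈ w.head?, u ∉ [Letter.AB, Letter.AC, Letter.AD])
    (j : ℕ) (hj : 1 ≤ j) (hw : w ≠ []) : 1 ≤ aexp w j := by
  cases w with
  | nil => exact absurd rfl hw
  | cons u t =>
    cases j with
    | zero => omega
    | succ j' =>
      have hu : u ∉ [Letter.AB, Letter.AC, Letter.AD] := hh u rfl
      rw [aexp, List.take_succ_cons, List.countP_cons]
      have : (u == Letter.BC || u == Letter.BD || u == Letter.CD) = true := by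
        cases u <;> simp_all
      rw [this]
      simp

lemma dexp_neg (w : List Letter)
    (hl : ∀ u ∈ w.getLast?, u ∉ [Letter.AD, Letter.BD, Letter.CD])
    (j : ℕ) (hj : j < w.length) : dexp w j ≤ -1 := by
  rw [dexp]
  have hne : w.drop j ≠ [] := by
    intro h
    have := congrArg List.length h
    simp at this
    omega
  have hmem := List.getLast_mem hne
  have hgl : (w.drop j).getLast hne ∈ w.getLast? := by
    have : w.getLast? = (w.drop j).getLast? := by
      conv_lhs => rw [← List.take_append_drop j w]
      rw [List.getLast?_append]
      rw [List.getLast?_eq_getLast hne]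
      rfl
    rw [this, List.getLast?_eq_getLast hne]
    rfl
  have hu := hl _ hgl
  have hcnt : 0 < (w.drop j).countP
      (fun u => u == Letter.AB || u == Letter.AC || u == Letter.BC) := by
    rw [List.countP_pos_iff]
    refine ⟨(w.drop j).getLast hne, hmem, ?_⟩
    cases h : (w.drop j).getLast hne <;> simp_all
  omega
set_option maxHeartbeats 1000000 in
lemma caseBC (a : ℕ) (b c d : ℤ) :
    vq ^ (((a:ℤ)+1) * (d+1)) * pprod vB (b+1 - (d+1)) (a+1) * pprod vC (c+1 - (d+1)) (a+1) /
      (pprod vB (b+1) (a+1) * pprod vC (c+1) (a+1)) /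
    (vq ^ ((a:ℤ) * d) * pprod vB (b - d) a * pprod vC (c - d) a /
      (pprod vB b a * pprod vC c a))
    = (vA / (vA - vB * vq ^ (b+1)) - vA / (vA - vC * vq ^ (c+1))) /
      (vA / (vA - vB * vq ^ (b - a - d)) - vA / (vA - vC * vq ^ (c - a - d))) := by
  rw [show b+1 - (d+1) = b - d by ring, show c+1-(d+1) = c - d by ring]
  rw [pprod_succ_bot vB (b-d) a, pprod_succ_bot vC (c-d) a]
  rw [show pprod vB (b+1) (a+1) = pprod vB b a * (vA - vB * vq ^ (b+1)) from by
    rw [pprod_succ_top, show b+1-1 = b by ring]]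
  rw [show pprod vC (c+1) (a+1) = pprod vC c a * (vA - vC * vq ^ (c+1)) from by
    rw [pprod_succ_top, show c+1-1 = c by ring]]
  rw [omega_form (vB * vq ^ (b+1)) (vC * vq ^ (c+1)) (ABq_ne _) (ACq_ne _),
    omega_form (vB * vq ^ (b - a - d)) (vC * vq ^ (c - a - d)) (ABq_ne _) (ACq_ne _)]
  have h1 := pprod_ne_B (b-d) a
  have h2 := pprod_ne_C (c-d) a
  have h3 := pprod_ne_B b a
  have h4 := pprod_ne_C c a
  have h5 : vB * vq ^ (b - ↑a - d) - vC * vq ^ (c - ↑a - d) ≠ 0 := BC_ne _ _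
  have h8 := ABq_ne (b - (a:ℤ) - d); have h9 := ACq_ne (c - (a:ℤ) - d)
  rw [div_eq_div_iff
    (div_ne_zero (mul_ne_zero (mul_ne_zero (zpow_ne_zero _ vq_ne) h1) h2) (mul_ne_zero h3 h4))
    (div_ne_zero (mul_ne_zero vA_ne h5) (mul_ne_zero h8 h9))]
  rw [show b - d - (a:ℤ) = b - ↑a - d by ring, show c - d - (a:ℤ) = c - ↑a - d by ring,
    show ((a:ℤ)+1) * (d+1) = (a:ℤ)*d + ((a:ℤ) + (d+1)) by ring,
    show b + 1 = (b - ↑a - d) + ((a:ℤ) + (d+1)) by ring,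
    show c + 1 = (c - ↑a - d) + ((a:ℤ) + (d+1)) by ring,
    show b - d = (b - ↑a - d) + (a:ℤ) by ring,
    show c - d = (c - ↑a - d) + (a:ℤ) by ring]
  have h6 := ABq_ne ((b - (a:ℤ) - d) + ((a:ℤ) + (d+1)))
  have h7 := ACq_ne ((c - (a:ℤ) - d) + ((a:ℤ) + (d+1)))
  simp only [zpow_add₀ vq_ne, zpow_one, zpow_natCast] at h6 h7 ⊢
  field_simp [h5, h6, h7, h8, h9, vA_ne, vq_ne]
set_option maxHeartbeats 1000000 in
lemma caseAB (a b c : ℕ) (d : ℤ) (ha : a ≠ 0) :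
    vq ^ ((a:ℤ) * (d+1)) * pprod vB ((↑(b+1) : ℤ) - (d+1)) a * pprod vC ((c:ℤ) - (d+1)) a /
      (pprod vB (↑(b+1) : ℤ) a * pprod vC (c:ℤ) a) /
    (vq ^ ((a:ℤ) * d) * pprod vB ((b:ℤ) - d) a * pprod vC ((c:ℤ) - d) a /
      (pprod vB (b:ℤ) a * pprod vC (c:ℤ) a))
    = (vA / (vA - vA * vq ^ ((a:ℕ) : ℤ)) - vA / (vA - vB * vq ^ ((↑(b+1)) : ℤ))) /
      (vA / (vA - vC * vq ^ ((c:ℤ) - (a:ℤ) - d)) - vA / (vA - vA * vq ^ (-(a:ℤ)))) := by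
  obtain ⟨m, rfl⟩ : ∃ m, a = m + 1 := ⟨a - 1, by omega⟩
  push_cast
  rw [show (b:ℤ) + 1 - (d+1) = (b:ℤ) - d by ring]
  rw [show (c:ℤ) - (d+1) = (c:ℤ) - d - 1 by ring]
  rw [pprod_succ_bot vC ((c:ℤ) - d - 1) m]
  rw [pprod_succ_top vC ((c:ℤ) - d) m]
  rw [show pprod vB ((b:ℤ)+1) (m+1) = pprod vB (b:ℤ) m * (vA - vB * vq ^ ((b:ℤ)+1)) from by
    rw [pprod_succ_top, show (b:ℤ)+1-1 = (b:ℤ) by ring]]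
  rw [pprod_succ_bot vB (b:ℤ) m]
  rw [omega_form (vA * vq ^ ((m:ℤ)+1)) (vB * vq ^ ((b:ℤ)+1)) (AAq_ne _ (by omega)) (ABq_ne _)]
  rw [omega_form (vC * vq ^ ((c:ℤ) - ((m:ℤ)+1) - d)) (vA * vq ^ (-((m:ℤ)+1)))
    (ACq_ne _) (AAq_ne _ (by omega))]
  rw [flip_num2 vC ((m:ℤ)+1) ((c:ℤ) - ((m:ℤ)+1) - d)]
  rw [AA_flip ((m:ℤ)+1)]
  have h1 := pprod_ne_B ((b:ℤ) - d) (m+1)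
  have h2 := pprod_ne_C ((c:ℤ) - d - 1) m
  have h3 := pprod_ne_B (b:ℤ) m
  have h4 := pprod_ne_C (c:ℤ) (m+1)
  have h5 : vC * vq ^ ((c:ℤ) - ((m:ℤ)+1) - d + ((m:ℤ)+1)) - vA ≠ 0 := by
    have := CA_ne ((c:ℤ) - ((m:ℤ)+1) - d + ((m:ℤ)+1)) 0
    simpa using this
  have h8 := ACq_ne ((c:ℤ) - ((m:ℤ)+1) - d)
  have h10' := ABq_ne ((b:ℤ) - (m:ℤ))
  have h9 := AAq_ne (-((m:ℤ)+1)) (by omega)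
  have hS : vq ^ (-((m:ℤ)+1)) ≠ 0 := zpow_ne_zero _ vq_ne
  have h7 := AAq_ne ((m:ℤ) + 1) (by omega)
  have h7' := AAe_ne ((m:ℤ) + 1) (by omega)
  have h6 := ABq_ne ((b:ℤ) + 1)
  rw [div_eq_div_iff
    (div_ne_zero (mul_ne_zero (mul_ne_zero (zpow_ne_zero _ vq_ne) h1)
      (mul_ne_zero h2 (ACq_ne _))) (mul_ne_zero (mul_ne_zero h3 h10') h4))
    (div_ne_zero (mul_ne_zero vA_ne (mul_ne_zero hS h5))
      (mul_ne_zero h8 (mul_ne_zero hS h7')))]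
  rw [div_mul_div_comm, div_mul_div_comm]
  rw [div_eq_div_iff
    (mul_ne_zero (mul_ne_zero (mul_ne_zero h3 h6) h4)
      (mul_ne_zero h8 (mul_ne_zero hS h7')))
    (mul_ne_zero (mul_ne_zero h7 h6) (mul_ne_zero (mul_ne_zero h3 h10') h4))]
  -- exponent decomposition
  rw [show ((m:ℤ)+1) * (d+1) = ((m:ℤ)+1)*d + ((m:ℤ) + 1) by ring,
    show (c:ℤ) - d - 1 - (m:ℤ) = (c:ℤ) - ((m:ℤ)+1) - d by ring,
    show (c:ℤ) - d = ((c:ℤ) - ((m:ℤ)+1) - d) + ((m:ℤ) + 1) by ring,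
    show (b:ℤ) + 1 = ((b:ℤ) - (m:ℤ)) + ((m:ℤ) + 1) by ring]
  simp only [zpow_add₀ vq_ne, zpow_one, zpow_natCast]
  ring
set_option maxHeartbeats 1000000 in
lemma caseAC (a b c : ℕ) (d : ℤ) (ha : a ≠ 0) :
    vq ^ ((a:ℤ) * (d+1)) * pprod vB ((b:ℤ) - (d+1)) a * pprod vC ((↑(c+1) : ℤ) - (d+1)) a /
      (pprod vB (b:ℤ) a * pprod vC (↑(c+1) : ℤ) a) /
    (vq ^ ((a:ℤ) * d) * pprod vB ((b:ℤ) - d) a * pprod vC ((c:ℤ) - d) a /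
      (pprod vB (b:ℤ) a * pprod vC (c:ℤ) a))
    = (vA / (vA - vA * vq ^ ((a:ℕ) : ℤ)) - vA / (vA - vC * vq ^ ((↑(c+1)) : ℤ))) /
      (vA / (vA - vB * vq ^ ((b:ℤ) - (a:ℤ) - d)) - vA / (vA - vA * vq ^ (-(a:ℤ)))) := by
  obtain ⟨m, rfl⟩ : ∃ m, a = m + 1 := ⟨a - 1, by omega⟩
  push_cast
  rw [show (c:ℤ) + 1 - (d+1) = (c:ℤ) - d by ring]
  rw [show (b:ℤ) - (d+1) = (b:ℤ) - d - 1 by ring]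
  rw [pprod_succ_bot vB ((b:ℤ) - d - 1) m]
  rw [pprod_succ_top vB ((b:ℤ) - d) m]
  rw [show pprod vC ((c:ℤ)+1) (m+1) = pprod vC (c:ℤ) m * (vA - vC * vq ^ ((c:ℤ)+1)) from by
    rw [pprod_succ_top, show (c:ℤ)+1-1 = (c:ℤ) by ring]]
  rw [pprod_succ_bot vC (c:ℤ) m]
  rw [omega_form (vA * vq ^ ((m:ℤ)+1)) (vC * vq ^ ((c:ℤ)+1)) (AAq_ne _ (by omega)) (ACq_ne _)]
  rw [omega_form (vB * vq ^ ((b:ℤ) - ((m:ℤ)+1) - d)) (vA * vq ^ (-((m:ℤ)+1)))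
    (ABq_ne _) (AAq_ne _ (by omega))]
  rw [flip_num2 vB ((m:ℤ)+1) ((b:ℤ) - ((m:ℤ)+1) - d)]
  rw [AA_flip ((m:ℤ)+1)]
  have h1 := pprod_ne_C ((c:ℤ) - d) (m+1)
  have h2 := pprod_ne_B ((b:ℤ) - d - 1) m
  have h3 := pprod_ne_C (c:ℤ) m
  have h4 := pprod_ne_B (b:ℤ) (m+1)
  have h5 : vB * vq ^ ((b:ℤ) - ((m:ℤ)+1) - d + ((m:ℤ)+1)) - vA ≠ 0 := by
    have := BA_ne ((b:ℤ) - ((m:ℤ)+1) - d + ((m:ℤ)+1)) 0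
    simpa using this
  have h8 := ABq_ne ((b:ℤ) - ((m:ℤ)+1) - d)
  have h10' := ACq_ne ((c:ℤ) - (m:ℤ))
  have hS : vq ^ (-((m:ℤ)+1)) ≠ 0 := zpow_ne_zero _ vq_ne
  have h7 := AAq_ne ((m:ℤ) + 1) (by omega)
  have h7' := AAe_ne ((m:ℤ) + 1) (by omega)
  have h6 := ACq_ne ((c:ℤ) + 1)
  rw [div_eq_div_iff
    (div_ne_zero (mul_ne_zero (mul_ne_zero (zpow_ne_zero _ vq_ne)
      (mul_ne_zero h2 (ABq_ne _))) h1) (mul_ne_zero h4 (mul_ne_zero h3 h10')))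
    (div_ne_zero (mul_ne_zero vA_ne (mul_ne_zero hS h5))
      (mul_ne_zero h8 (mul_ne_zero hS h7')))]
  rw [div_mul_div_comm, div_mul_div_comm]
  rw [div_eq_div_iff
    (mul_ne_zero (mul_ne_zero h4 (mul_ne_zero h3 h6))
      (mul_ne_zero h8 (mul_ne_zero hS h7')))
    (mul_ne_zero (mul_ne_zero h7 h6) (mul_ne_zero h4 (mul_ne_zero h3 h10')))]
  rw [show ((m:ℤ)+1) * (d+1) = ((m:ℤ)+1)*d + ((m:ℤ) + 1) by ring,
    show (b:ℤ) - d - 1 - (m:ℤ) = (b:ℤ) - ((m:ℤ)+1) - d by ring,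
    show (b:ℤ) - d = ((b:ℤ) - ((m:ℤ)+1) - d) + ((m:ℤ) + 1) by ring,
    show (c:ℤ) + 1 = ((c:ℤ) - (m:ℤ)) + ((m:ℤ) + 1) by ring]
  simp only [zpow_add₀ vq_ne, zpow_one, zpow_natCast]
  ring

set_option maxHeartbeats 1000000 in
lemma caseAD (a b c : ℕ) (d : ℤ) (ha : a ≠ 0) (hd : d ≠ 0) (had : (a:ℤ) ≠ d) :
    vq ^ ((a:ℤ) * d) * pprod vB ((b:ℤ) - d) a * pprod vC ((c:ℤ) - d) a /
      (pprod vB (b:ℤ) a * pprod vC (c:ℤ) a) /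
    (vq ^ ((a:ℤ) * d) * pprod vB ((b:ℤ) - d) a * pprod vC ((c:ℤ) - d) a /
      (pprod vB (b:ℤ) a * pprod vC (c:ℤ) a))
    = (vA / (vA - vA * vq ^ ((a:ℕ) : ℤ)) - vA / (vA - vA * vq ^ d)) /
      (vA / (vA - vA * vq ^ (-d)) - vA / (vA - vA * vq ^ (-(a:ℤ)))) := by
  have hA : (a:ℤ) ≠ 0 := Int.natCast_ne_zero.mpr ha
  rw [div_self (div_ne_zero (mul_ne_zero (mul_ne_zero (zpow_ne_zero _ vq_ne)
    (pprod_ne_B _ _)) (pprod_ne_C _ _)) (mul_ne_zero (pprod_ne_B _ _) (pprod_ne_C _ _)))]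
  rw [omega_form (vA * vq ^ ((a:ℤ))) (vA * vq ^ d) (AAq_ne _ hA) (AAq_ne _ hd)]
  rw [omega_form (vA * vq ^ (-d)) (vA * vq ^ (-(a:ℤ)))
    (AAq_ne _ (by omega)) (AAq_ne _ (by omega))]
  rw [flip_numAD d ((a:ℤ))]
  rw [AA_flip d, AA_flip ((a:ℤ))]
  have hT : vq ^ (-d) ≠ 0 := zpow_ne_zero _ vq_ne
  have hS : vq ^ (-(a:ℤ)) ≠ 0 := zpow_ne_zero _ vq_ne
  have h1 := AAq_ne ((a:ℤ)) hA
  have h2 := AAq_ne d hd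
  have h1' := AAe_ne ((a:ℤ)) hA
  have h2' := AAe_ne d hd
  have h5 : vA * vq ^ ((a:ℤ)) - vA * vq ^ d ≠ 0 := AA_ne _ _ had
  rw [eq_comm, div_eq_one_iff_eq (div_ne_zero
    (mul_ne_zero vA_ne (mul_ne_zero hT (mul_ne_zero hS h5)))
    (mul_ne_zero (mul_ne_zero hT h2') (mul_ne_zero hS h1')))]
  rw [div_eq_div_iff (mul_ne_zero h1 h2)
    (mul_ne_zero (mul_ne_zero hT h2') (mul_ne_zero hS h1'))]
  ring

set_option maxHeartbeats 1000000 in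
lemma caseBD (a b c : ℕ) (d : ℤ) (hd : d ≠ 0) :
    vq ^ ((↑(a+1) : ℤ) * d) * pprod vB ((↑(b+1) : ℤ) - d) (a+1) * pprod vC ((c:ℤ) - d) (a+1) /
      (pprod vB (↑(b+1) : ℤ) (a+1) * pprod vC (c:ℤ) (a+1)) /
    (vq ^ ((a:ℤ) * d) * pprod vB ((b:ℤ) - d) a * pprod vC ((c:ℤ) - d) a /
      (pprod vB (b:ℤ) a * pprod vC (c:ℤ) a))
    = (vA / (vA - vB * vq ^ ((↑(b+1)) : ℤ)) - vA / (vA - vA * vq ^ d)) /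
      (vA / (vA - vA * vq ^ (-d)) - vA / (vA - vC * vq ^ ((c:ℤ) - (a:ℤ) - d))) := by
  push_cast
  rw [show pprod vB ((b:ℤ)+1-d) (a+1)
      = pprod vB ((b:ℤ)-d) a * (vA - vB * vq ^ ((b:ℤ)+1-d)) from by
    rw [pprod_succ_top, show (b:ℤ)+1-d-1 = (b:ℤ)-d by ring]]
  rw [pprod_succ_bot vC ((c:ℤ) - d) a]
  rw [show pprod vB ((b:ℤ)+1) (a+1) = pprod vB (b:ℤ) a * (vA - vB * vq ^ ((b:ℤ)+1)) from by
    rw [pprod_succ_top, show (b:ℤ)+1-1 = (b:ℤ) by ring]]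
  rw [pprod_succ_bot vC (c:ℤ) a]
  rw [omega_form (vB * vq ^ ((b:ℤ)+1)) (vA * vq ^ d) (ABq_ne _) (AAq_ne _ hd)]
  rw [omega_form (vA * vq ^ (-d)) (vC * vq ^ ((c:ℤ) - (a:ℤ) - d))
    (AAq_ne _ (by omega)) (ACq_ne _)]
  rw [flip_num1 vC d ((c:ℤ) - (a:ℤ) - d)]
  rw [AA_flip d]
  have h1 := pprod_ne_B ((b:ℤ) - d) a
  have h2 := pprod_ne_C ((c:ℤ) - d) a
  have h3 := pprod_ne_B (b:ℤ) a
  have h4 := pprod_ne_C (c:ℤ) a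
  have hT : vq ^ (-d) ≠ 0 := zpow_ne_zero _ vq_ne
  have h5 := ACq_ne ((c:ℤ) - (a:ℤ) - d + d)
  have h6 := ABq_ne ((b:ℤ) + 1)
  have h7 := AAq_ne d hd
  have h7' := AAe_ne d hd
  have h8 := ACq_ne ((c:ℤ) - (a:ℤ) - d)
  have h9 := ABq_ne ((b:ℤ) + 1 - d)
  have h10 := ACq_ne ((c:ℤ) - (a:ℤ))
  rw [div_eq_div_iff
    (div_ne_zero (mul_ne_zero (mul_ne_zero (zpow_ne_zero _ vq_ne) h1) h2)
      (mul_ne_zero h3 h4))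
    (div_ne_zero (mul_ne_zero vA_ne (mul_ne_zero hT h5))
      (mul_ne_zero (mul_ne_zero hT h7') h8))]
  rw [div_mul_div_comm, div_mul_div_comm]
  rw [div_eq_div_iff
    (mul_ne_zero (mul_ne_zero (mul_ne_zero h3 h6) (mul_ne_zero h4 h10))
      (mul_ne_zero (mul_ne_zero hT h7') h8))
    (mul_ne_zero (mul_ne_zero h6 h7) (mul_ne_zero h3 h4))]
  rw [show ((a:ℤ)+1) * d = (a:ℤ)*d + d by ring,
    show (c:ℤ) - d - (a:ℤ) = (c:ℤ) - (a:ℤ) - d by ring,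
    show vq ^ ((b:ℤ)+1) = vq ^ (((b:ℤ)+1-d) + d) from by congr 1; ring,
    show vq ^ ((c:ℤ)-(a:ℤ)) = vq ^ (((c:ℤ)-(a:ℤ)-d) + d) from by congr 1; ring]
  simp only [zpow_add₀ vq_ne, zpow_one, zpow_natCast]
  ring

set_option maxHeartbeats 1000000 in
lemma caseCD (a b c : ℕ) (d : ℤ) (hd : d ≠ 0) :
    vq ^ ((↑(a+1) : ℤ) * d) * pprod vB ((b:ℤ) - d) (a+1) * pprod vC ((↑(c+1) : ℤ) - d) (a+1) /
      (pprod vB (b:ℤ) (a+1) * pprod vC (↑(c+1) : ℤ) (a+1)) /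
    (vq ^ ((a:ℤ) * d) * pprod vB ((b:ℤ) - d) a * pprod vC ((c:ℤ) - d) a /
      (pprod vB (b:ℤ) a * pprod vC (c:ℤ) a))
    = (vA / (vA - vC * vq ^ ((↑(c+1)) : ℤ)) - vA / (vA - vA * vq ^ d)) /
      (vA / (vA - vA * vq ^ (-d)) - vA / (vA - vB * vq ^ ((b:ℤ) - (a:ℤ) - d))) := by
  push_cast
  rw [show pprod vC ((c:ℤ)+1-d) (a+1)
      = pprod vC ((c:ℤ)-d) a * (vA - vC * vq ^ ((c:ℤ)+1-d)) from by
    rw [pprod_succ_top, show (c:ℤ)+1-d-1 = (c:ℤ)-d by ring]]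
  rw [pprod_succ_bot vB ((b:ℤ) - d) a]
  rw [show pprod vC ((c:ℤ)+1) (a+1) = pprod vC (c:ℤ) a * (vA - vC * vq ^ ((c:ℤ)+1)) from by
    rw [pprod_succ_top, show (c:ℤ)+1-1 = (c:ℤ) by ring]]
  rw [pprod_succ_bot vB (b:ℤ) a]
  rw [omega_form (vC * vq ^ ((c:ℤ)+1)) (vA * vq ^ d) (ACq_ne _) (AAq_ne _ hd)]
  rw [omega_form (vA * vq ^ (-d)) (vB * vq ^ ((b:ℤ) - (a:ℤ) - d))
    (AAq_ne _ (by omega)) (ABq_ne _)]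
  rw [flip_num1 vB d ((b:ℤ) - (a:ℤ) - d)]
  rw [AA_flip d]
  have h1 := pprod_ne_C ((c:ℤ) - d) a
  have h2 := pprod_ne_B ((b:ℤ) - d) a
  have h3 := pprod_ne_C (c:ℤ) a
  have h4 := pprod_ne_B (b:ℤ) a
  have hT : vq ^ (-d) ≠ 0 := zpow_ne_zero _ vq_ne
  have h5 := ABq_ne ((b:ℤ) - (a:ℤ) - d + d)
  have h6 := ACq_ne ((c:ℤ) + 1)
  have h7 := AAq_ne d hd
  have h7' := AAe_ne d hd
  have h8 := ABq_ne ((b:ℤ) - (a:ℤ) - d)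
  have h9 := ACq_ne ((c:ℤ) + 1 - d)
  have h10 := ABq_ne ((b:ℤ) - (a:ℤ))
  rw [div_eq_div_iff
    (div_ne_zero (mul_ne_zero (mul_ne_zero (zpow_ne_zero _ vq_ne) h2) h1)
      (mul_ne_zero h4 h3))
    (div_ne_zero (mul_ne_zero vA_ne (mul_ne_zero hT h5))
      (mul_ne_zero (mul_ne_zero hT h7') h8))]
  rw [div_mul_div_comm, div_mul_div_comm]
  rw [div_eq_div_iff
    (mul_ne_zero (mul_ne_zero (mul_ne_zero h4 h10) (mul_ne_zero h3 h6))
      (mul_ne_zero (mul_ne_zero hT h7') h8))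
    (mul_ne_zero (mul_ne_zero h6 h7) (mul_ne_zero h4 h3))]
  rw [show ((a:ℤ)+1) * d = (a:ℤ)*d + d by ring,
    show (b:ℤ) - d - (a:ℤ) = (b:ℤ) - (a:ℤ) - d by ring,
    show vq ^ ((c:ℤ)+1) = vq ^ (((c:ℤ)+1-d) + d) from by congr 1; ring,
    show vq ^ ((b:ℤ)-(a:ℤ)) = vq ^ (((b:ℤ)-(a:ℤ)-d) + d) from by congr 1; ring]
  simp only [zpow_add₀ vq_ne, zpow_one, zpow_natCast]
  ring
lemma omegaF_AB (w : List Letter) (j : Fin w.length) (h : w.get j = Letter.AB) :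
    omegaF w j = vA / (vA - vA * vq ^ (aexp w (j + 1)))
      - vA / (vA - vB * vq ^ (bexp w (j + 1))) := by
  unfold omegaF; rw [h]

lemma omegaF_AC (w : List Letter) (j : Fin w.length) (h : w.get j = Letter.AC) :
    omegaF w j = vA / (vA - vA * vq ^ (aexp w (j + 1)))
      - vA / (vA - vC * vq ^ (cexp w (j + 1))) := by
  unfold omegaF; rw [h]

lemma omegaF_AD (w : List Letter) (j : Fin w.length) (h : w.get j = Letter.AD) :
    omegaF w j = vA / (vA - vA * vq ^ (aexp w (j + 1)))
      - vA / (vA - vA * vq ^ (dexp w (j + 1))) := by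
  unfold omegaF; rw [h]

lemma omegaF_BC (w : List Letter) (j : Fin w.length) (h : w.get j = Letter.BC) :
    omegaF w j = vA / (vA - vB * vq ^ (bexp w (j + 1)))
      - vA / (vA - vC * vq ^ (cexp w (j + 1))) := by
  unfold omegaF; rw [h]

lemma omegaF_BD (w : List Letter) (j : Fin w.length) (h : w.get j = Letter.BD) :
    omegaF w j = vA / (vA - vB * vq ^ (bexp w (j + 1)))
      - vA / (vA - vA * vq ^ (dexp w (j + 1))) := by
  unfold omegaF; rw [h]

lemma omegaF_CD (w : List Letter) (j : Fin w.length) (h : w.get j = Letter.CD) :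
    omegaF w j = vA / (vA - vC * vq ^ (cexp w (j + 1)))
      - vA / (vA - vA * vq ^ (dexp w (j + 1))) := by
  unfold omegaF; rw [h]

lemma tau_get (w : List Letter) (j : Fin w.length)
    (hc : w.length = (tauWord w).length) :
    (tauWord w).get (Fin.cast hc j.rev) = (w.get j).dual := by
  rcases j with ⟨v, hv⟩
  simp only [tauWord, List.get_eq_getElem, Fin.coe_cast, Fin.val_rev]
  rw [List.getElem_reverse, List.getElem_map]
  simp only [List.length_map]
  congr 2
  show w.length - 1 - (w.length - (v + 1)) = v
  omega

lemma Phi_ne (w : List Letter) (m : ℕ) : Phi w m ≠ 0 := by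
  unfold Phi
  exact div_ne_zero (mul_ne_zero (mul_ne_zero (zpow_ne_zero _ vq_ne)
    (pprod_ne_B _ _)) (pprod_ne_C _ _)) (mul_ne_zero (pprod_ne_B _ _) (pprod_ne_C _ _))

lemma Phi_zero (w : List Letter) : Phi w 0 = 1 := by
  have h : aexp w 0 = 0 := by simp [aexp]
  simp [Phi, h, pprod]

lemma Phi_top (w : List Letter) : Phi w w.length = 1 := by
  have hd0 : dexp w w.length = 0 := by simp [dexp]
  simp only [Phi, hd0, mul_zero, zpow_zero, sub_zero, one_mul]
  exact div_self (mul_ne_zero (pprod_ne_B _ _) (pprod_ne_C _ _))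

lemma get_zero_head (w : List Letter) (hw : 0 < w.length) :
    w.head? = some (w[0]) := by
  cases w with
  | nil => simp at hw
  | cons u t => rfl
set_option maxHeartbeats 2000000 in
/-- **The telescoping step in the `A = D` case** (proof of Theorem 4.8): for each
`1 ≤ j ≤ k`, `Φ(j)/Φ(j−1) = ω_j / ω'_{k+1−j}` (where `ω'` are the factors of
`L_q(τ(w))`), and consequently `∏_{j=1}^k ω_j = ∏_{j=1}^k ω'_j`. -/
theorem Phi_telescoping (w : List Letter) (hadm : AdmissibleWord w) :
    (∀ j : Fin w.length,
      Phi w ((j : ℕ) + 1) / Phi w (j : ℕ)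
        = omegaF w j
          / omegaF (tauWord w)
              (Fin.cast (show w.length = (tauWord w).length by simp [tauWord])
                j.rev)) ∧
    (∏ j : Fin w.length, omegaF w j)
      = ∏ j : Fin (tauWord w).length, omegaF (tauWord w) j := by
  obtain ⟨hh, hl⟩ := hadm
  have hc : w.length = (tauWord w).length := by simp [tauWord]
  have key : ∀ j : Fin w.length,
      Phi w ((j : ℕ) + 1) / Phi w (j : ℕ)
        = omegaF w j / omegaF (tauWord w) (Fin.cast hc j.rev) := by
    intro j
    have hj0 : (j : ℕ) < w.length := j.isLt
    have hwne : w ≠ [] := by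
      intro h
      have hz : w.length = 0 := by rw [h]; rfl
      omega
    have hgj : w[(j : ℕ)] = w.get j := by rw [List.get_eq_getElem]
    have hget : (tauWord w).get (Fin.cast hc j.rev) = (w.get j).dual := tau_get w j hc
    have hidx : ((Fin.cast hc j.rev : Fin (tauWord w).length) : ℕ) + 1
        = w.length - (j : ℕ) := by
      simp only [Fin.coe_cast, Fin.val_rev]
      omega
    have hjle : (j : ℕ) ≤ w.length := le_of_lt hj0
    have ta := tau_aexp w (j : ℕ) hjle
    have tb := tau_bexp w (j : ℕ) hjle
    have tc := tau_cexp w (j : ℕ) hjle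
    have td := tau_dexp w (j : ℕ) hjle
    have hdneg : dexp w (j : ℕ) ≤ -1 := dexp_neg w hl (j : ℕ) hj0
    -- helper for a-positivity in the A-cases
    have hapos : ∀ u0, w.get j = u0 → u0 ∈ [Letter.AB, Letter.AC, Letter.AD] →
        aexp w (j : ℕ) ≠ 0 := by
      intro u0 hu0 hmem
      have hj1 : 1 ≤ (j : ℕ) := by
        by_contra h0
        have hz : (j : ℕ) = 0 := by omega
        have := hh (w[0]) (get_zero_head w (by omega))
        simp only [hz] at hgj
        rw [hgj, hu0] at this
        exact this hmem
      have := aexp_pos w hh (j : ℕ) hj1 hwne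
      omega
    cases hu : w.get j with
    | AB =>
      have hgj' : w[(j : ℕ)] = Letter.AB := by rw [hgj, hu]
      have ea : aexp w ((j : ℕ)+1) = aexp w (j : ℕ) := by
        unfold aexp
        rw [countP_take_succ _ w _ hj0, hgj']
        simp
        try push_cast
        try omega
      have eb : bexp w ((j : ℕ)+1) = bexp w (j : ℕ) + 1 := by
        unfold bexp
        rw [countP_take_succ _ w _ hj0, countP_drop_split (fun u => u == Letter.CD) w _ hj0,
          hgj']
        simp
        try push_cast
        try omega
      have ec : cexp w ((j : ℕ)+1) = cexp w (j : ℕ) := by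
        unfold cexp
        rw [countP_take_succ _ w _ hj0, countP_drop_split (fun u => u == Letter.BD) w _ hj0,
          hgj']
        simp
        try push_cast
        try omega
      have ed : dexp w ((j : ℕ)+1) = dexp w (j : ℕ) + 1 := by
        unfold dexp
        rw [countP_drop_split (fun u => u == Letter.AB || u == Letter.AC || u == Letter.BC)
          w _ hj0, hgj']
        simp
        try push_cast
        try omega
        try push_cast
        try omega
      rw [omegaF_AB w j hu, omegaF_CD (tauWord w) _ (by rw [hget, hu]; rfl)]
      unfold Phi
      rw [hidx, ea, eb, ec, ed]
      simp only [← zpow_natCast]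
      rw [tc, td]
      exact caseAB (aexp w (j:ℕ)) (bexp w (j:ℕ)) (cexp w (j:ℕ)) (dexp w (j:ℕ))
        (hapos _ hu (by simp))
    | AC =>
      have hgj' : w[(j : ℕ)] = Letter.AC := by rw [hgj, hu]
      have ea : aexp w ((j : ℕ)+1) = aexp w (j : ℕ) := by
        unfold aexp
        rw [countP_take_succ _ w _ hj0, hgj']
        simp
        try push_cast
        try omega
      have eb : bexp w ((j : ℕ)+1) = bexp w (j : ℕ) := by
        unfold bexp
        rw [countP_take_succ _ w _ hj0, countP_drop_split (fun u => u == Letter.CD) w _ hj0,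
          hgj']
        simp
        try push_cast
        try omega
      have ec : cexp w ((j : ℕ)+1) = cexp w (j : ℕ) + 1 := by
        unfold cexp
        rw [countP_take_succ _ w _ hj0, countP_drop_split (fun u => u == Letter.BD) w _ hj0,
          hgj']
        simp
        try push_cast
        try omega
      have ed : dexp w ((j : ℕ)+1) = dexp w (j : ℕ) + 1 := by
        unfold dexp
        rw [countP_drop_split (fun u => u == Letter.AB || u == Letter.AC || u == Letter.BC)
          w _ hj0, hgj']
        simp
        try push_cast
        try omega
        try push_cast
        try omega
      rw [omegaF_AC w j hu, omegaF_BD (tauWord w) _ (by rw [hget, hu]; rfl)]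
      unfold Phi
      rw [hidx, ea, eb, ec, ed]
      simp only [← zpow_natCast]
      rw [tb, td]
      exact caseAC (aexp w (j:ℕ)) (bexp w (j:ℕ)) (cexp w (j:ℕ)) (dexp w (j:ℕ))
        (hapos _ hu (by simp))
    | AD =>
      have hgj' : w[(j : ℕ)] = Letter.AD := by rw [hgj, hu]
      have ea : aexp w ((j : ℕ)+1) = aexp w (j : ℕ) := by
        unfold aexp
        rw [countP_take_succ _ w _ hj0, hgj']
        simp
        try push_cast
        try omega
      have eb : bexp w ((j : ℕ)+1) = bexp w (j : ℕ) := by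
        unfold bexp
        rw [countP_take_succ _ w _ hj0, countP_drop_split (fun u => u == Letter.CD) w _ hj0,
          hgj']
        simp
        try push_cast
        try omega
      have ec : cexp w ((j : ℕ)+1) = cexp w (j : ℕ) := by
        unfold cexp
        rw [countP_take_succ _ w _ hj0, countP_drop_split (fun u => u == Letter.BD) w _ hj0,
          hgj']
        simp
        try push_cast
        try omega
      have ed : dexp w ((j : ℕ)+1) = dexp w (j : ℕ) := by
        unfold dexp
        rw [countP_drop_split (fun u => u == Letter.AB || u == Letter.AC || u == Letter.BC)
          w _ hj0, hgj']
        simp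
        try push_cast
        try omega
      rw [omegaF_AD w j hu, omegaF_AD (tauWord w) _ (by rw [hget, hu]; rfl)]
      unfold Phi
      rw [hidx, ea, eb, ec, ed]
      simp only [← zpow_natCast]
      rw [ta, td]
      exact caseAD (aexp w (j:ℕ)) (bexp w (j:ℕ)) (cexp w (j:ℕ)) (dexp w (j:ℕ))
        (hapos _ hu (by simp)) (by omega)
        (by have := hapos _ hu (by simp); omega)
    | BC =>
      have hgj' : w[(j : ℕ)] = Letter.BC := by rw [hgj, hu]
      have ea : aexp w ((j : ℕ)+1) = aexp w (j : ℕ) + 1 := by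
        unfold aexp
        rw [countP_take_succ _ w _ hj0, hgj']
        simp
        try push_cast
        try omega
      have eb : bexp w ((j : ℕ)+1) = bexp w (j : ℕ) + 1 := by
        unfold bexp
        rw [countP_take_succ _ w _ hj0, countP_drop_split (fun u => u == Letter.CD) w _ hj0,
          hgj']
        simp
        try push_cast
        try omega
      have ec : cexp w ((j : ℕ)+1) = cexp w (j : ℕ) + 1 := by
        unfold cexp
        rw [countP_take_succ _ w _ hj0, countP_drop_split (fun u => u == Letter.BD) w _ hj0,
          hgj']
        simp
        try push_cast
        try omega
      have ed : dexp w ((j : ℕ)+1) = dexp w (j : ℕ) + 1 := by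
        unfold dexp
        rw [countP_drop_split (fun u => u == Letter.AB || u == Letter.AC || u == Letter.BC)
          w _ hj0, hgj']
        simp
        try push_cast
        try omega
        try push_cast
        try omega
      rw [omegaF_BC w j hu, omegaF_BC (tauWord w) _ (by rw [hget, hu]; rfl)]
      unfold Phi
      rw [hidx, ea, eb, ec, ed]
      simp only [← zpow_natCast]
      rw [tb, tc]
      push_cast
      exact caseBC (aexp w (j:ℕ)) (bexp w (j:ℕ)) (cexp w (j:ℕ)) (dexp w (j:ℕ))
    | BD =>
      have hgj' : w[(j : ℕ)] = Letter.BD := by rw [hgj, hu]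
      have ea : aexp w ((j : ℕ)+1) = aexp w (j : ℕ) + 1 := by
        unfold aexp
        rw [countP_take_succ _ w _ hj0, hgj']
        simp
        try push_cast
        try omega
      have eb : bexp w ((j : ℕ)+1) = bexp w (j : ℕ) + 1 := by
        unfold bexp
        rw [countP_take_succ _ w _ hj0, countP_drop_split (fun u => u == Letter.CD) w _ hj0,
          hgj']
        simp
        try push_cast
        try omega
      have ec : cexp w ((j : ℕ)+1) = cexp w (j : ℕ) := by
        unfold cexp
        rw [countP_take_succ _ w _ hj0, countP_drop_split (fun u => u == Letter.BD) w _ hj0,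
          hgj']
        simp
        try push_cast
        try omega
        try push_cast
        try omega
      have ed : dexp w ((j : ℕ)+1) = dexp w (j : ℕ) := by
        unfold dexp
        rw [countP_drop_split (fun u => u == Letter.AB || u == Letter.AC || u == Letter.BC)
          w _ hj0, hgj']
        simp
        try push_cast
        try omega
      rw [omegaF_BD w j hu, omegaF_AC (tauWord w) _ (by rw [hget, hu]; rfl)]
      unfold Phi
      rw [hidx, ea, eb, ec, ed]
      simp only [← zpow_natCast]
      rw [ta, tc]
      exact caseBD (aexp w (j:ℕ)) (bexp w (j:ℕ)) (cexp w (j:ℕ)) (dexp w (j:ℕ)) (by omega)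
    | CD =>
      have hgj' : w[(j : ℕ)] = Letter.CD := by rw [hgj, hu]
      have ea : aexp w ((j : ℕ)+1) = aexp w (j : ℕ) + 1 := by
        unfold aexp
        rw [countP_take_succ _ w _ hj0, hgj']
        simp
        try push_cast
        try omega
      have eb : bexp w ((j : ℕ)+1) = bexp w (j : ℕ) := by
        unfold bexp
        rw [countP_take_succ _ w _ hj0, countP_drop_split (fun u => u == Letter.CD) w _ hj0,
          hgj']
        simp
        try push_cast
        try omega
        try push_cast
        try omega
      have ec : cexp w ((j : ℕ)+1) = cexp w (j : ℕ) + 1 := by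
        unfold cexp
        rw [countP_take_succ _ w _ hj0, countP_drop_split (fun u => u == Letter.BD) w _ hj0,
          hgj']
        simp
        try push_cast
        try omega
      have ed : dexp w ((j : ℕ)+1) = dexp w (j : ℕ) := by
        unfold dexp
        rw [countP_drop_split (fun u => u == Letter.AB || u == Letter.AC || u == Letter.BC)
          w _ hj0, hgj']
        simp
        try push_cast
        try omega
      rw [omegaF_CD w j hu, omegaF_AB (tauWord w) _ (by rw [hget, hu]; rfl)]
      unfold Phi
      rw [hidx, ea, eb, ec, ed]
      simp only [← zpow_natCast]
      rw [ta, tb]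
      exact caseCD (aexp w (j:ℕ)) (bexp w (j:ℕ)) (cexp w (j:ℕ)) (dexp w (j:ℕ)) (by omega)
  refine ⟨fun j => key j, ?_⟩
  -- part 2
  have homega : ∀ j : Fin w.length,
      omegaF w j = (Phi w ((j:ℕ)+1) / Phi w (j:ℕ))
        * omegaF (tauWord w) (Fin.cast hc j.rev) := by
    intro j
    have hk := key j
    have hratio : Phi w ((j:ℕ)+1) / Phi w (j:ℕ) ≠ 0 :=
      div_ne_zero (Phi_ne w _) (Phi_ne w _)
    have h2 : omegaF (tauWord w) (Fin.cast hc j.rev) ≠ 0 := by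
      intro h0
      rw [h0, div_zero] at hk
      exact hratio hk
    rw [eq_div_iff h2] at hk
    exact hk.symm
  have tele : ∀ n : ℕ,
      (∏ i ∈ Finset.range n, (Phi w (i+1) / Phi w i)) = Phi w n / Phi w 0 := by
    intro n
    induction n with
    | zero => simp [div_self (Phi_ne w 0)]
    | succ n ih =>
      rw [Finset.prod_range_succ, ih]
      have h0 := Phi_ne w 0
      have hn := Phi_ne w n
      field_simp
  calc (∏ j : Fin w.length, omegaF w j)
      = ∏ j : Fin w.length, ((Phi w ((j:ℕ)+1) / Phi w (j:ℕ))
          * omegaF (tauWord w) (Fin.cast hc j.rev)) :=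
        Finset.prod_congr rfl (fun j _ => homega j)
    _ = (∏ j : Fin w.length, (Phi w ((j:ℕ)+1) / Phi w (j:ℕ)))
          * ∏ j : Fin w.length, omegaF (tauWord w) (Fin.cast hc j.rev) :=
        Finset.prod_mul_distrib
    _ = ∏ j : Fin (tauWord w).length, omegaF (tauWord w) j := by
        rw [Fin.prod_univ_eq_prod_range (fun i => Phi w (i+1) / Phi w i) w.length]
        rw [tele w.length, Phi_zero, Phi_top, div_one, one_mul]
        exact Fintype.prod_equiv (Fin.revPerm.trans (finCongr hc))
          (fun j => omegaF (tauWord w) (Fin.cast hc j.rev))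
          (fun i => omegaF (tauWord w) i) (fun j => rfl)
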